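/- Every graph G satisfies linear-mim(G) ≤ si(G), where linear-mim is the linear maximum induced matching width. -/
import Mathlib


/-- `(a, b, L)` is a `d`-simultaneous interval representation of `G`:
each vertex `v` gets a nonempty open interval `(a v, b v)` and a label set
`L v ⊆ {1,…,d}`, and distinct vertices are adjacent iff both their intervals
and their label sets intersect. -/
def IsSIRep {V : Type*} (G : SimpleGraph V) (d : ℕ)
    (a b : V → ℝ) (L : V → Finset (Fin d)) : Prop :=
  (∀ v, a v < b v) ∧
  ∀ u v : V, u ≠ v →
    (G.Adj u v ↔ (Set.Ioo (a u) (b u) ∩ Set.Ioo (a v) (b v)).Nonempty ∧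
      (L u ∩ L v).Nonempty)

/-- The simultaneous interval number of `G`. -/
noncomputable def si {V : Type*} (G : SimpleGraph V) : ℕ :=
  sInf {d | ∃ a b L, IsSIRep G d a b L}

/-- The linear mim-width of a finite graph `G`: the least `w` such that for some
vertex ordering, every induced matching of `G` all of whose edges cross a fixed
cut of the ordering has size at most `w`. -/
noncomputable def linearMim {V : Type*} [Fintype V] (G : SimpleGraph V) : ℕ :=
  sInf {w | ∃ σ : Fin (Fintype.card V) ≃ V,
    ∀ (i : ℕ) (m : ℕ) (x y : Fin m → V),
      (∀ j, G.Adj (x j) (y j)) →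
      (∀ j, ((σ.symm (x j) : ℕ) < i ∧ i ≤ (σ.symm (y j) : ℕ))) →
      (∀ j l, j ≠ l → ¬ G.Adj (x j) (x l) ∧ ¬ G.Adj (x j) (y l) ∧
        ¬ G.Adj (y j) (y l) ∧ x j ≠ x l ∧ x j ≠ y l ∧ y j ≠ y l) →
      m ≤ w}

section Aux

private lemma ioo_disj {a1 b1 a2 b2 : ℝ} (h1 : a1 < b1) (h2 : a2 < b2)
    (h : ¬ (Set.Ioo a1 b1 ∩ Set.Ioo a2 b2).Nonempty) : b1 ≤ a2 ∨ b2 ≤ a1 := by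
  rw [Set.Ioo_inter_Ioo, Set.nonempty_Ioo] at h
  push_neg at h
  by_contra hc
  push_neg at hc
  obtain ⟨h1', h2'⟩ := hc
  have : a1 ⊔ a2 < b1 ⊓ b2 := by
    simp only [lt_inf_iff, sup_lt_iff]
    exact ⟨⟨h1, h1'⟩, h2', h2⟩
  exact absurd this (not_lt.mpr h)

private lemma four_intervals (axj bxj ayj byj axl bxl ayl byl p q : ℝ)
    (hp1 : axj < p) (hp2 : p < bxj) (hp3 : ayj < p) (hp4 : p < byj)
    (hq1 : axl < q) (hq2 : q < bxl) (hq3 : ayl < q) (hq4 : q < byl)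
    (h1 : bxj ≤ axl ∨ bxl ≤ axj) (h2 : bxj ≤ ayl ∨ byl ≤ axj)
    (h3 : bxl ≤ ayj ∨ byj ≤ axl) (h4 : byj ≤ ayl ∨ byl ≤ ayj)
    (ho1 : axl ≤ ayj) (ho2 : axj ≤ ayl) : False := by
  rcases h1 with h1|h1 <;> rcases h2 with h2|h2 <;> rcases h3 with h3|h3 <;>
    rcases h4 with h4|h4 <;> linarith

private lemma si_rep_exists {V : Type*} [Fintype V] (G : SimpleGraph V) :
    ∃ a b L, IsSIRep G (Fintype.card (V × V)) a b L := by
  classical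
  set e := Fintype.equivFin (V × V) with he
  refine ⟨fun _ => (0 : ℝ), fun _ => 1, fun v => (Finset.univ.filter
      (fun p : V × V => (p.1 = v ∧ G.Adj v p.2) ∨ (p.2 = v ∧ G.Adj p.1 v))).image e,
      fun _ => one_pos, fun u v huv => ?_⟩
  constructor
  · intro hadj
    refine ⟨⟨(1:ℝ)/2, by norm_num, by norm_num⟩, ⟨e (u, v), Finset.mem_inter.mpr ⟨?_, ?_⟩⟩⟩
    · exact Finset.mem_image_of_mem e (Finset.mem_filter.mpr ⟨Finset.mem_univ _,
        Or.inl ⟨rfl, hadj⟩⟩)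
    · exact Finset.mem_image_of_mem e (Finset.mem_filter.mpr ⟨Finset.mem_univ _,
        Or.inr ⟨rfl, hadj⟩⟩)
  · rintro ⟨-, c, hc⟩
    rw [Finset.mem_inter] at hc
    obtain ⟨hcu, hcv⟩ := hc
    obtain ⟨p, hp, hpe⟩ := Finset.mem_image.mp hcu
    obtain ⟨p', hp', hpe'⟩ := Finset.mem_image.mp hcv
    have : p = p' := e.injective (hpe.trans hpe'.symm)
    subst this
    have hu := (Finset.mem_filter.mp hp).2
    have hv := (Finset.mem_filter.mp hp').2
    rcases hu with ⟨h1, h2⟩ | ⟨h1, h2⟩ <;> rcases hv with ⟨h3, h4⟩ | ⟨h3, h4⟩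
    · exact absurd (h1.symm.trans h3) huv
    · subst h1; subst h3; exact h2
    · subst h1; subst h3; exact h4.symm
    · exact absurd (h1.symm.trans h3) huv

end Aux

/-- Every graph satisfies `linear-mim(G) ≤ si(G)`. -/
theorem linearMim_le_si {V : Type*} [Fintype V] (G : SimpleGraph V) :
    linearMim G ≤ si G := by
  classical
  have hne : {d | ∃ a b L, IsSIRep G d a b L}.Nonempty :=
    ⟨_, si_rep_exists G⟩
  obtain ⟨av, bv, Lv, hab, hadj⟩ :
      ∃ a b L, IsSIRep G (si G) a b L := Nat.sInf_mem hne
  apply Nat.sInf_le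
  -- build the ordering sorted by left endpoints
  set n := Fintype.card V with hn
  set e : V ≃ Fin n := Fintype.equivFin V with he
  set f : Fin n → ℝ := av ∘ e.symm with hf
  set σ : Fin n ≃ V := (Tuple.sort f).trans e.symm with hσ
  have hmono : ∀ u v : V, (σ.symm u : ℕ) < (σ.symm v : ℕ) → av u ≤ av v := by
    intro u v huv
    have h1 : av u = (f ∘ Tuple.sort f) (σ.symm u) := by
      simp [hσ, hf, Function.comp]
    have h2 : av v = (f ∘ Tuple.sort f) (σ.symm v) := by
      simp [hσ, hf, Function.comp]
    rw [h1, h2]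
    exact Tuple.monotone_sort f (le_of_lt (Fin.lt_def.mpr huv))
  refine ⟨σ, fun i m x y hxy hcut hind => ?_⟩
  -- label choice
  have hlab : ∀ j, ((Lv (x j) ∩ Lv (y j)).Nonempty) := fun j =>
    (((hadj _ _ (hxy j).ne).mp (hxy j))).2
  choose c hc using hlab
  have hcL : ∀ j, c j ∈ Lv (x j) ∧ c j ∈ Lv (y j) := by
    intro j
    have := hc j
    rw [Finset.mem_inter] at this
    exact this
  -- c is injective
  have hinj : Function.Injective c := by
    intro j l hjl
    by_contra hne'
    obtain ⟨hjl1, hjl2, hjl3, hjl4, hjl5, hjl6⟩ := hind j l hne'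
    obtain ⟨hlj1, hlj2, hlj3, hlj4, hlj5, hlj6⟩ := hind l j (Ne.symm hne')
    -- disjointness of intervals for non-adjacent pairs sharing label c j
    have dshare : ∀ u v : V, u ≠ v → ¬ G.Adj u v → c j ∈ Lv u → c j ∈ Lv v →
        bv u ≤ av v ∨ bv v ≤ av u := by
      intro u v huv hnadj hu hv
      refine ioo_disj (hab u) (hab v) (fun hI => hnadj ?_)
      exact (hadj u v huv).mpr ⟨hI, ⟨c j, Finset.mem_inter.mpr ⟨hu, hv⟩⟩⟩
    have d1 := dshare (x j) (x l) hjl4 hjl1 (hcL j).1 (hjl ▸ (hcL l).1)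
    have d2 := dshare (x j) (y l) hjl5 hjl2 (hcL j).1 (hjl ▸ (hcL l).2)
    have d3 := dshare (x l) (y j) hlj5 hlj2 (hjl ▸ (hcL l).1) (hcL j).2
    have d4 := dshare (y j) (y l) hjl6 hjl3 (hcL j).2 (hjl ▸ (hcL l).2)
    obtain ⟨p, hp⟩ := (((hadj _ _ (hxy j).ne).mp (hxy j))).1
    obtain ⟨q, hq⟩ := (((hadj _ _ (hxy l).ne).mp (hxy l))).1
    obtain ⟨⟨hp1, hp2⟩, hp3, hp4⟩ := hp
    obtain ⟨⟨hq1, hq2⟩, hq3, hq4⟩ := hq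
    have ho1 : av (x l) ≤ av (y j) :=
      hmono _ _ (lt_of_lt_of_le (hcut l).1 (hcut j).2)
    have ho2 : av (x j) ≤ av (y l) :=
      hmono _ _ (lt_of_lt_of_le (hcut j).1 (hcut l).2)
    exact four_intervals (av (x j)) (bv (x j)) (av (y j)) (bv (y j))
      (av (x l)) (bv (x l)) (av (y l)) (bv (y l)) p q
      hp1 hp2 hp3 hp4 hq1 hq2 hq3 hq4 d1 d2 d3 d4 ho1 ho2
  calc m = Fintype.card (Fin m) := (Fintype.card_fin m).symm
    _ ≤ Fintype.card (Fin (si G)) := Fintype.card_le_of_injective c hinj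
    _ = si G := Fintype.card_fin _
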